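/- Each linear equivalence class of configurations contains exactly one critical configuration. -/

import Mathlib

/-- A finite directed multigraph without loops on `Fin (n+1)` with global sink `Fin.last n`. -/
structure SinkDigraph (n : ℕ) where
  e : Fin (n + 1) → Fin (n + 1) → ℕ
  loopless : ∀ i, e i i = 0
  sink_no_out : ∀ j, e (Fin.last n) j = 0
  path_to_sink : ∀ i, Relation.ReflTransGen (fun u v => 0 < e u v) i (Fin.last n)

namespace SinkDigraph

variable {n : ℕ}

/-- Out-degree of a vertex. -/
def outDeg (G : SinkDigraph n) (i : Fin (n + 1)) : ℕ := ∑ j, G.e i j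

/-- The (full) Laplacian matrix over ℤ. -/
def lap (G : SinkDigraph n) : Matrix (Fin (n + 1)) (Fin (n + 1)) ℤ :=
  Matrix.of fun i j => if i = j then (G.outDeg i : ℤ) else -(G.e i j : ℤ)

/-- The reduced Laplacian (rows/columns of the sink removed). -/
def redLap (G : SinkDigraph n) : Matrix (Fin n) (Fin n) ℤ :=
  Matrix.of fun i j => G.lap i.castSucc j.castSucc

/-- The reduced Laplacian over ℚ. -/
def redLapQ (G : SinkDigraph n) : Matrix (Fin n) (Fin n) ℚ :=
  (G.redLap).map (Int.cast : ℤ → ℚ)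

/-- A ℕ-script viewed as integer vector. -/
def natScript (σ : Fin n → ℕ) : Fin n → ℤ := fun i => (σ i : ℤ)

/-- Result of firing vertex `i` in configuration `a`. -/
def fire (G : SinkDigraph n) (a : Fin n → ℤ) (i : Fin n) : Fin n → ℤ :=
  fun j => a j - G.redLap i j

/-- Result of firing a sequence of vertices. -/
def applySeq (G : SinkDigraph n) : (Fin n → ℤ) → List (Fin n) → (Fin n → ℤ)
  | a, [] => a
  | a, i :: s => G.applySeq (G.fire a i) s

/-- A firing sequence is legal from `a` if every fired vertex is active when fired. -/
def Legal (G : SinkDigraph n) : (Fin n → ℤ) → List (Fin n) → Prop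
  | _, [] => True
  | a, i :: s => G.redLap i i ≤ a i ∧ G.Legal (G.fire a i) s

/-- The firing script of a firing sequence. -/
def script (s : List (Fin n)) : Fin n → ℤ := fun i => (s.count i : ℤ)

/-- A configuration is stable if it is non-negative and no vertex is active. -/
def IsStable (G : SinkDigraph n) (a : Fin n → ℤ) : Prop :=
  ∀ i, 0 ≤ a i ∧ a i < G.redLap i i

/-- `b` is the stabilization of `a`. -/
def Stabilizes (G : SinkDigraph n) (a b : Fin n → ℤ) : Prop :=
  ∃ s : List (Fin n), G.Legal a s ∧ G.applySeq a s = b ∧ G.IsStable b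

/-- The maximal stable configuration `c_max`. -/
def cmax (G : SinkDigraph n) : Fin n → ℤ := fun i => (G.outDeg i.castSucc : ℤ) - 1

/-- A stable configuration is critical if it is the stabilization of `c_max + c`
for some non-negative `c`. -/
def IsCritical (G : SinkDigraph n) (a : Fin n → ℤ) : Prop :=
  ∃ c : Fin n → ℤ, 0 ≤ c ∧ G.Stabilizes (G.cmax + c) a

/-- `σΔ ≻ 0`, i.e. `σΔ` is non-negative and non-zero. -/
def GPositive (G : SinkDigraph n) (σ : Fin n → ℕ) : Prop :=
  0 ≤ Matrix.vecMul (natScript σ) G.redLap ∧ Matrix.vecMul (natScript σ) G.redLap ≠ 0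

/-- Reachability along directed edges. -/
def Reach (G : SinkDigraph n) : Fin (n + 1) → Fin (n + 1) → Prop :=
  Relation.ReflTransGen (fun u v => 0 < G.e u v)

/-- A source component: a strongly connected component with no in-going edge from outside. -/
def IsSourceComponent (G : SinkDigraph n) (S : Set (Fin (n + 1))) : Prop :=
  (∃ i, S = {j | G.Reach i j ∧ G.Reach j i}) ∧ ∀ j ∉ S, ∀ k ∈ S, G.e j k = 0

/-- A `G`-strongly positive script. -/
def GStronglyPositive (G : SinkDigraph n) (σ : Fin n → ℕ) : Prop :=
  G.GPositive σ ∧ ∀ S : Set (Fin (n + 1)), G.IsSourceComponent S →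
    ∃ i : Fin n, i.castSucc ∈ S ∧ Matrix.vecMul (natScript σ) G.redLap i ≠ 0

/-- Linear equivalence of configurations. -/
def Equiv (G : SinkDigraph n) (a b : Fin n → ℤ) : Prop :=
  ∃ σ : Fin n → ℤ, b - a = Matrix.vecMul σ G.redLap

/-- The weight of a configuration. -/
def weight (a : Fin n → ℤ) : ℤ := ∑ i, a i

/-- The energy (CFG) order: compare energy vectors `aΔ⁻¹` componentwise over ℚ. -/
def cfgLE (G : SinkDigraph n) (a b : Fin n → ℤ) : Prop :=
  Matrix.vecMul (fun i => (a i : ℚ)) (G.redLapQ)⁻¹ ≤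
    Matrix.vecMul (fun i => (b i : ℚ)) (G.redLapQ)⁻¹

/-- A non-negative configuration is superstable if reverse-firing any nonzero ℕ-script
produces a negative component. -/
def IsSuperstable (G : SinkDigraph n) (a : Fin n → ℤ) : Prop :=
  0 ≤ a ∧ ∀ σ : Fin n → ℕ, σ ≠ 0 →
    ∃ i, a i - Matrix.vecMul (natScript σ) G.redLap i < 0

end SinkDigraph

namespace SinkDigraph

open Matrix Finset

variable {n : ℕ} (G : SinkDigraph n)

lemma redLap_diag (i : Fin n) : G.redLap i i = (G.outDeg i.castSucc : ℤ) := by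
  simp [redLap, lap]

lemma redLap_off {i j : Fin n} (h : i ≠ j) :
    G.redLap i j = -(G.e i.castSucc j.castSucc : ℤ) := by
  simp [redLap, lap, h]

lemma outDeg_pos (i : Fin n) : 0 < G.outDeg i.castSucc := by
  rcases (G.path_to_sink i.castSucc).cases_head with h | ⟨b, hb, -⟩
  · exact absurd h (Fin.castSucc_lt_last i).ne
  · exact lt_of_lt_of_le hb
      (Finset.single_le_sum (f := fun j => G.e i.castSucc j)
        (fun _ _ => Nat.zero_le _) (Finset.mem_univ b))

lemma row_decomp (x : Fin n → ℚ) (u : Fin n) :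
    (G.redLapQ.mulVec x) u =
      (∑ j : Fin n, (G.e u.castSucc j.castSucc : ℚ) * (x u - x j))
        + (G.e u.castSucc (Fin.last n) : ℚ) * x u := by
  have hd : (G.outDeg u.castSucc : ℚ)
      = (∑ j : Fin n, (G.e u.castSucc j.castSucc : ℚ)) + (G.e u.castSucc (Fin.last n) : ℚ) := by
    rw [outDeg]
    push_cast
    rw [Fin.sum_univ_castSucc]
  have hloop : (G.e u.castSucc u.castSucc : ℚ) = 0 := by rw [G.loopless]; simp
  have L : (G.redLapQ.mulVec x) u
      = (G.outDeg u.castSucc : ℚ) * x u - ∑ j, (G.e u.castSucc j.castSucc : ℚ) * x j := by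
    rw [Matrix.mulVec, dotProduct]
    rw [← Finset.add_sum_erase _ _ (Finset.mem_univ u)]
    have h1 : G.redLapQ u u * x u = (G.outDeg u.castSucc : ℚ) * x u := by
      simp [redLapQ, redLap, lap]
    have h2 : ∀ j ∈ Finset.univ.erase u,
        G.redLapQ u j * x j = -((G.e u.castSucc j.castSucc : ℚ) * x j) := by
      intro j hj
      have hne : u ≠ j := (Finset.ne_of_mem_erase hj).symm
      simp [redLapQ, redLap, lap, hne]
    rw [h1, Finset.sum_congr rfl h2, Finset.sum_neg_distrib]
    have h3 : ∑ j ∈ Finset.univ.erase u, (G.e u.castSucc j.castSucc : ℚ) * x j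
        = ∑ j, (G.e u.castSucc j.castSucc : ℚ) * x j := by
      apply Finset.sum_erase
      rw [hloop, zero_mul]
    rw [h3]
    ring
  have R : (∑ j : Fin n, (G.e u.castSucc j.castSucc : ℚ) * (x u - x j))
      = (∑ j : Fin n, (G.e u.castSucc j.castSucc : ℚ)) * x u
        - ∑ j, (G.e u.castSucc j.castSucc : ℚ) * x j := by
    rw [Finset.sum_mul, ← Finset.sum_sub_distrib]
    exact Finset.sum_congr rfl (by intros; ring)
  rw [L, R, hd]
  ring

lemma mulVec_nonneg_of (x : Fin n → ℚ) (h : ∀ j, 0 ≤ (G.redLapQ.mulVec x) j) (j : Fin n) :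
    0 ≤ x j := by
  by_contra hneg
  push_neg at hneg
  obtain ⟨i, -, hmin⟩ := Finset.exists_min_image Finset.univ x ⟨j, Finset.mem_univ j⟩
  have hM : x i < 0 := lt_of_le_of_lt (hmin j (Finset.mem_univ j)) hneg
  have key : ∀ u : Fin n, x u = x i →
      G.e u.castSucc (Fin.last n) = 0 ∧
        ∀ v : Fin n, 0 < G.e u.castSucc v.castSucc → x v = x i := by
    intro u hu
    have h0 := h u
    rw [G.row_decomp x u] at h0
    have hterm : ∀ k ∈ Finset.univ, (G.e u.castSucc k.castSucc : ℚ) * (x u - x k) ≤ 0 := by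
      intro k _
      apply mul_nonpos_of_nonneg_of_nonpos (by positivity)
      rw [hu]
      exact sub_nonpos.mpr (hmin k (Finset.mem_univ k))
    have hsum : (∑ k : Fin n, (G.e u.castSucc k.castSucc : ℚ) * (x u - x k)) ≤ 0 :=
      Finset.sum_nonpos hterm
    have hlast : (G.e u.castSucc (Fin.last n) : ℚ) * x u ≤ 0 := by
      apply mul_nonpos_of_nonneg_of_nonpos (by positivity)
      rw [hu]; exact hM.le
    have hsum0 : (∑ k : Fin n, (G.e u.castSucc k.castSucc : ℚ) * (x u - x k)) = 0 :=
      le_antisymm hsum (by linarith)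
    have hlast0 : (G.e u.castSucc (Fin.last n) : ℚ) * x u = 0 := by linarith
    constructor
    · have : (G.e u.castSucc (Fin.last n) : ℚ) = 0 := by
        rcases mul_eq_zero.mp hlast0 with h' | h'
        · exact h'
        · exact absurd h' (by rw [hu]; exact hM.ne)
      exact_mod_cast this
    · intro v hv
      have h' := (Finset.sum_eq_zero_iff_of_nonpos hterm).mp hsum0 v (Finset.mem_univ v)
      rcases mul_eq_zero.mp h' with h'' | h''
      · exact absurd h'' (by exact_mod_cast hv.ne')
      · have := sub_eq_zero.mp h''
        exact this.symm.trans hu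
  have path : ∀ v : Fin (n+1),
      Relation.ReflTransGen (fun a b => 0 < G.e a b) i.castSucc v →
      ∃ u : Fin n, v = u.castSucc ∧ x u = x i := by
    intro v hv
    induction hv with
    | refl => exact ⟨i, rfl, rfl⟩
    | @tail b c hab hbc ih =>
      obtain ⟨u, rfl, hu⟩ := ih
      obtain ⟨hlast, hnext⟩ := key u hu
      by_cases hc : c = Fin.last n
      · rw [hc, hlast] at hbc
        exact absurd hbc (lt_irrefl 0)
      · obtain ⟨w, rfl⟩ := Fin.exists_castSucc_eq.mpr hc
        exact ⟨w, rfl, hnext w hbc⟩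
  obtain ⟨u, hu, -⟩ := path (Fin.last n) (G.path_to_sink i.castSucc)
  exact absurd hu.symm (Fin.castSucc_lt_last u).ne

lemma det_ne : G.redLapQ.det ≠ 0 := by
  intro hdet
  obtain ⟨v, hv0, hv⟩ := (Matrix.exists_mulVec_eq_zero_iff).mpr hdet
  apply hv0
  funext j
  have h1 := G.mulVec_nonneg_of v (fun k => by simp [hv]) j
  have h2 := G.mulVec_nonneg_of (-v) (fun k => by simp [Matrix.mulVec_neg, hv]) j
  simp only [Pi.neg_apply] at h2
  simp only [Pi.zero_apply]
  linarith

noncomputable def invN : Matrix (Fin n) (Fin n) ℚ := (G.redLapQ)⁻¹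

lemma isUnit_det : IsUnit G.redLapQ.det := isUnit_iff_ne_zero.mpr G.det_ne

lemma mul_invN : G.redLapQ * G.invN = 1 := Matrix.mul_nonsing_inv _ G.isUnit_det

lemma invN_mul : G.invN * G.redLapQ = 1 := Matrix.nonsing_inv_mul _ G.isUnit_det

lemma invN_nonneg (i j : Fin n) : 0 ≤ G.invN i j := by
  have h : G.redLapQ.mulVec (G.invN.mulVec (Pi.single j 1)) = Pi.single j 1 := by
    rw [Matrix.mulVec_mulVec, G.mul_invN, Matrix.one_mulVec]
  have h2 := G.mulVec_nonneg_of (G.invN.mulVec (Pi.single j 1))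
    (fun l => by rw [h]; by_cases hl : l = j <;> simp [Pi.single_apply, hl]) i
  rw [Matrix.mulVec_single_one] at h2
  simpa using h2

lemma vecMul_invN_mono {u v : Fin n → ℚ} (h : ∀ i, u i ≤ v i) (j : Fin n) :
    Matrix.vecMul u G.invN j ≤ Matrix.vecMul v G.invN j := by
  simp only [Matrix.vecMul, dotProduct]
  exact Finset.sum_le_sum fun i _ => mul_le_mul_of_nonneg_right (h i) (G.invN_nonneg i j)

lemma cast_vecMul (σ : Fin n → ℤ) (j : Fin n) :
    ((Matrix.vecMul σ G.redLap j : ℤ) : ℚ)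
      = Matrix.vecMul (fun i => (σ i : ℚ)) G.redLapQ j := by
  simp only [Matrix.vecMul, dotProduct, redLapQ, Matrix.map_apply]
  push_cast
  rfl

lemma nonpos_of_vecMul_nonpos {σ : Fin n → ℤ}
    (h : ∀ j, Matrix.vecMul σ G.redLap j ≤ 0) (i : Fin n) : σ i ≤ 0 := by
  have key : (σ i : ℚ) ≤ 0 := by
    have e1 : (fun i => (σ i : ℚ))
        = Matrix.vecMul (Matrix.vecMul (fun i => (σ i : ℚ)) G.redLapQ) G.invN := by
      rw [Matrix.vecMul_vecMul, G.mul_invN, Matrix.vecMul_one]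
    have e2 : ∀ j, Matrix.vecMul (fun i => (σ i : ℚ)) G.redLapQ j ≤ (0 : Fin n → ℚ) j := by
      intro j
      rw [← G.cast_vecMul]
      simpa using (by exact_mod_cast h j : ((Matrix.vecMul σ G.redLap j : ℤ) : ℚ) ≤ 0)
    calc (σ i : ℚ) = Matrix.vecMul (Matrix.vecMul (fun i => (σ i : ℚ)) G.redLapQ) G.invN i :=
          congrFun e1 i
      _ ≤ Matrix.vecMul (0 : Fin n → ℚ) G.invN i := G.vecMul_invN_mono e2 i
      _ = 0 := by rw [Matrix.zero_vecMul]; rfl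
  exact_mod_cast key

end SinkDigraph

namespace SinkDigraph

open Matrix Finset

variable {n : ℕ} (G : SinkDigraph n)

lemma script_nonneg (s : List (Fin n)) (i : Fin n) : 0 ≤ script s i :=
  Int.natCast_nonneg _

lemma script_cons (i : Fin n) (s : List (Fin n)) :
    script (i :: s) = Pi.single i 1 + script s := by
  funext j
  simp only [script, List.count_cons, Pi.add_apply, Pi.single_apply]
  by_cases h : j = i
  · subst h; simp; ring
  · simp [h, Ne.symm h]

lemma fire_eq (y : Fin n → ℤ) (i : Fin n) :
    G.fire y i = y - Matrix.vecMul (Pi.single i 1) G.redLap := by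
  funext j
  simp [fire, Matrix.single_vecMul]

lemma applySeq_eq (s : List (Fin n)) : ∀ y, G.applySeq y s = y - Matrix.vecMul (script s) G.redLap := by
  induction s with
  | nil =>
    intro y
    funext j
    simp [applySeq, script, Matrix.vecMul, dotProduct]
  | cons i s ih =>
    intro y
    show G.applySeq (G.fire y i) s = _
    rw [ih, fire_eq, script_cons, Matrix.add_vecMul]
    funext j
    simp only [Pi.sub_apply, Pi.add_apply]
    ring

lemma fire_nonneg {y : Fin n → ℤ} (hy : ∀ j, 0 ≤ y j) {i : Fin n} (hi : G.redLap i i ≤ y i) :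
    ∀ j, 0 ≤ G.fire y i j := by
  intro j
  by_cases h : j = i
  · subst h
    show (0:ℤ) ≤ y j - G.redLap j j
    omega
  · have hle : G.redLap i j ≤ 0 := by
      rw [G.redLap_off (Ne.symm h)]
      exact neg_nonpos.mpr (Int.natCast_nonneg _)
    have := hy j
    show (0:ℤ) ≤ y j - G.redLap i j
    omega

lemma legal_applySeq_nonneg (s : List (Fin n)) : ∀ y, G.Legal y s → 0 ≤ y → 0 ≤ G.applySeq y s := by
  induction s with
  | nil => intro y _ hy; exact hy
  | cons i s ih =>
    intro y hleg hy
    exact ih _ hleg.2 (Pi.le_def.mpr (G.fire_nonneg (Pi.le_def.mp hy) hleg.1))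

lemma vecMul_nonpos_at {σ : Fin n → ℤ} (hσ : ∀ j, 0 ≤ σ j) {i : Fin n} (hi : σ i = 0) :
    Matrix.vecMul σ G.redLap i ≤ 0 := by
  simp only [Matrix.vecMul, dotProduct]
  apply Finset.sum_nonpos
  intro j _
  by_cases hj : j = i
  · subst hj; simp [hi]
  · rw [G.redLap_off hj]
    exact mul_nonpos_of_nonneg_of_nonpos (hσ j) (neg_nonpos.mpr (Int.natCast_nonneg _))

lemma cmax_eq (i : Fin n) : G.cmax i = G.redLap i i - 1 := by
  rw [redLap_diag]; rfl

lemma least_action (s : List (Fin n)) : ∀ y : Fin n → ℤ, G.Legal y s →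
    ∀ σ : Fin n → ℤ, (∀ i, 0 ≤ σ i) →
    (∀ i, y i - Matrix.vecMul σ G.redLap i ≤ G.cmax i) →
    ∀ i, script s i ≤ σ i := by
  induction s with
  | nil =>
    intro y _ σ hσ _ i
    simpa [script] using hσ i
  | cons k s ih =>
    intro y hleg σ hσ hub i
    have hk1 : 1 ≤ σ k := by
      by_contra hk
      push_neg at hk
      have hk0 : σ k = 0 := le_antisymm (by omega) (hσ k)
      have hv : Matrix.vecMul σ G.redLap k ≤ 0 := G.vecMul_nonpos_at hσ hk0
      have h1 := hub k
      have h2 := G.cmax_eq k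
      have h3 : G.redLap k k ≤ y k := hleg.1
      omega
    set σ' : Fin n → ℤ := σ - Pi.single k 1 with hσdef
    have hstep : ∀ i, G.fire y k i - Matrix.vecMul σ' G.redLap i ≤ G.cmax i := by
      intro i
      rw [hσdef, fire_eq, Matrix.sub_vecMul]
      have := hub i
      simp only [Pi.sub_apply]
      omega
    have hσ' : ∀ i, 0 ≤ σ' i := by
      rw [hσdef]
      intro i
      by_cases h : i = k
      · subst h; simp only [Pi.sub_apply, Pi.single_eq_same]; omega
      · simp only [Pi.sub_apply, Pi.single_apply, h, if_false]
        have := hσ i; omega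
    have hrec := ih (G.fire y k) hleg.2 σ' hσ' hstep i
    rw [hσdef] at hrec
    rw [script_cons]
    simp only [Pi.sub_apply] at hrec
    by_cases h : i = k
    · subst h
      simp only [Pi.add_apply, Pi.single_eq_same] at hrec ⊢
      omega
    · simp only [Pi.add_apply, Pi.single_apply, h, if_false] at hrec ⊢
      omega

lemma length_eq_sum (s : List (Fin n)) : (s.length : ℤ) = ∑ i, script s i := by
  induction s with
  | nil => simp [script]
  | cons k s ih =>
    rw [script_cons, List.length_cons]
    push_cast
    simp only [Pi.add_apply]
    rw [Finset.sum_add_distrib, ← ih]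
    have h1 : ∑ i, (Pi.single k (1:ℤ)) i = 1 := by simp
    omega

lemma exists_length_bound (y : Fin n → ℤ) (hy : 0 ≤ y) :
    ∃ N : ℕ, ∀ s : List (Fin n), G.Legal y s → s.length ≤ N := by
  set B : ℚ := ∑ j, Matrix.vecMul (fun i => (y i : ℚ)) G.invN j with hB
  refine ⟨(⌈B⌉).toNat, ?_⟩
  intro s hs
  have happ := G.legal_applySeq_nonneg s y hs hy
  rw [G.applySeq_eq] at happ
  rw [Pi.le_def] at happ hy
  have hle : ∀ j, Matrix.vecMul (script s) G.redLap j ≤ y j := by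
    intro j
    have := happ j
    simp only [Pi.sub_apply, Pi.zero_apply] at this
    omega
  have hq : ∀ i, (script s i : ℚ) ≤ Matrix.vecMul (fun k => (y k : ℚ)) G.invN i := by
    intro i
    have e1 : (script s i : ℚ)
        = Matrix.vecMul (Matrix.vecMul (fun k => (script s k : ℚ)) G.redLapQ) G.invN i := by
      rw [Matrix.vecMul_vecMul, G.mul_invN, Matrix.vecMul_one]
    rw [e1]
    apply G.vecMul_invN_mono
    intro j
    rw [← G.cast_vecMul]
    exact_mod_cast hle j
  have hsum : (s.length : ℚ) ≤ B := by
    have e2 : ((s.length : ℤ) : ℚ) = ∑ i, (script s i : ℚ) := by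
      rw [length_eq_sum]; push_cast; rfl
    have : ((s.length : ℤ) : ℚ) ≤ B := by
      rw [e2, hB]
      exact Finset.sum_le_sum fun i _ => hq i
    exact_mod_cast this
  have h1 : (s.length : ℚ) ≤ (⌈B⌉ : ℚ) := hsum.trans (Int.le_ceil B)
  have h2 : (s.length : ℤ) ≤ ⌈B⌉ := by exact_mod_cast h1
  have h3 : (s.length : ℤ) ≤ ((⌈B⌉).toNat : ℤ) := h2.trans (Int.self_le_toNat _)
  exact_mod_cast h3

lemma stab_aux : ∀ N : ℕ, ∀ y : Fin n → ℤ, 0 ≤ y →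
    (∀ s, G.Legal y s → s.length ≤ N) → ∃ b, G.Stabilizes y b := by
  intro N
  induction N with
  | zero =>
    intro y hy hbound
    refine ⟨y, [], trivial, rfl, ?_⟩
    intro i
    refine ⟨(Pi.le_def.mp hy) i, ?_⟩
    by_contra hlt
    push_neg at hlt
    have := hbound [i] ⟨hlt, trivial⟩
    simp at this
  | succ N ih =>
    intro y hy hbound
    by_cases hst : G.IsStable y
    · exact ⟨y, [], trivial, rfl, hst⟩
    · rw [IsStable] at hst
      push_neg at hst
      obtain ⟨i, hi⟩ := hst
      have hyi : G.redLap i i ≤ y i := hi ((Pi.le_def.mp hy) i)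
      obtain ⟨b, s, h1, h2, h3⟩ := ih (G.fire y i) (G.fire_nonneg hy hyi) (fun s hs => by
        have := hbound (i :: s) ⟨hyi, hs⟩
        simpa using this)
      exact ⟨b, i :: s, ⟨hyi, h1⟩, h2, h3⟩

end SinkDigraph

namespace SinkDigraph

open Matrix Finset

variable {n : ℕ} (G : SinkDigraph n)

lemma exists_dominating (v : Fin n → ℤ) :
    ∃ σ : Fin n → ℤ, ∀ j, v j ≤ Matrix.vecMul σ G.redLap j := by
  set w : Fin n → ℚ := Matrix.vecMul (fun _ => (1:ℚ)) G.invN with hw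
  have hwD : ∀ j, Matrix.vecMul w G.redLapQ j = 1 := by
    intro j
    rw [hw, Matrix.vecMul_vecMul, G.invN_mul, Matrix.vecMul_one]
  set C : ℚ := ∑ j, ∑ i, |G.redLapQ i j| with hC
  set V : ℚ := ∑ j, |(v j : ℚ)| with hV
  set k : ℕ := (⌈C + V⌉).toNat with hk
  set σ : Fin n → ℤ := fun i => ⌈(k:ℚ) * w i⌉ with hσ
  refine ⟨σ, ?_⟩
  intro j
  have key : (v j : ℚ) ≤ Matrix.vecMul (fun i => (σ i : ℚ)) G.redLapQ j := by
    have lower : ∀ i, (k:ℚ) * w i * G.redLapQ i j - |G.redLapQ i j| ≤ (σ i : ℚ) * G.redLapQ i j := by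
      intro i
      have h1 : (k:ℚ) * w i ≤ (σ i : ℚ) := Int.le_ceil _
      have h2 : (σ i : ℚ) ≤ (k:ℚ) * w i + 1 := by
        have := Int.ceil_lt_add_one ((k:ℚ) * w i)
        have : ((⌈(k:ℚ) * w i⌉ : ℤ) : ℚ) < (k:ℚ) * w i + 1 := this
        simpa [hσ] using this.le
      rcases le_or_gt 0 (G.redLapQ i j) with h | h
      · have habs : |G.redLapQ i j| = G.redLapQ i j := abs_of_nonneg h
        nlinarith
      · have habs : |G.redLapQ i j| = -(G.redLapQ i j) := abs_of_neg h
        nlinarith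
    have sum_lower : ∑ i, ((k:ℚ) * w i * G.redLapQ i j - |G.redLapQ i j|)
        ≤ Matrix.vecMul (fun i => (σ i : ℚ)) G.redLapQ j := by
      simp only [Matrix.vecMul, dotProduct]
      exact Finset.sum_le_sum fun i _ => lower i
    have expand : ∑ i, ((k:ℚ) * w i * G.redLapQ i j - |G.redLapQ i j|)
        = (k:ℚ) * Matrix.vecMul w G.redLapQ j - ∑ i, |G.redLapQ i j| := by
      simp only [Matrix.vecMul, dotProduct]
      rw [Finset.sum_sub_distrib, Finset.mul_sum]
      congr 1
      exact Finset.sum_congr rfl (by intros; ring)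
    have hkCV : C + V ≤ (k : ℚ) := by
      have h1 : (C + V) ≤ ((⌈C + V⌉ : ℤ) : ℚ) := Int.le_ceil _
      have h2 : (⌈C + V⌉ : ℤ) ≤ (((⌈C + V⌉).toNat : ℕ) : ℤ) := Int.self_le_toNat _
      have h3 : ((⌈C + V⌉ : ℤ) : ℚ) ≤ ((((⌈C + V⌉).toNat : ℕ) : ℤ) : ℚ) := by exact_mod_cast h2
      have h4 : ((((⌈C + V⌉).toNat : ℕ) : ℤ) : ℚ) = (k : ℚ) := by rw [hk]; push_cast; ring
      linarith
    have hcol : ∑ i, |G.redLapQ i j| ≤ C := by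
      rw [hC]
      exact Finset.single_le_sum (f := fun j => ∑ i, |G.redLapQ i j|)
        (fun _ _ => Finset.sum_nonneg fun _ _ => abs_nonneg _) (Finset.mem_univ j)
    have hvj : (v j : ℚ) ≤ V := by
      have habs : |(v j : ℚ)| ≤ ∑ j, |(v j : ℚ)| :=
        Finset.single_le_sum (f := fun j => |(v j : ℚ)|) (fun _ _ => abs_nonneg _) (Finset.mem_univ j)
      calc (v j : ℚ) ≤ |(v j : ℚ)| := le_abs_self _
        _ ≤ V := by rw [hV]; exact habs
    have hV0 : 0 ≤ V := Finset.sum_nonneg fun _ _ => abs_nonneg _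
    calc (v j : ℚ) ≤ V := hvj
      _ ≤ (k:ℚ) * Matrix.vecMul w G.redLapQ j - ∑ i, |G.redLapQ i j| := by
          rw [hwD j, mul_one]; linarith
      _ = ∑ i, ((k:ℚ) * w i * G.redLapQ i j - |G.redLapQ i j|) := expand.symm
      _ ≤ Matrix.vecMul (fun i => (σ i : ℚ)) G.redLapQ j := sum_lower
  rw [← G.cast_vecMul] at key
  exact_mod_cast key

lemma stable_le_cmax {b : Fin n → ℤ} (hb : G.IsStable b) (i : Fin n) : b i ≤ G.cmax i := by
  have h1 := (hb i).2
  have h2 := G.cmax_eq i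
  omega

lemma critical_dual_superstable {b : Fin n → ℤ} (hb : G.IsCritical b) :
    G.IsSuperstable (G.cmax - b) := by
  obtain ⟨c, hc, s, hleg, happ, hstab⟩ := hb
  rw [Pi.le_def] at hc
  constructor
  · rw [Pi.le_def]
    intro i
    have := G.stable_le_cmax hstab i
    simp only [Pi.sub_apply, Pi.zero_apply]
    omega
  · intro σ hσ
    by_contra hno
    push_neg at hno
    set τ := script s with hτ
    have hb_eq : ∀ j, b j = G.cmax j + c j - Matrix.vecMul τ G.redLap j := by
      intro j
      have := congrFun (G.applySeq_eq s (G.cmax + c)) j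
      rw [happ] at this
      simpa using this
    set σZ : Fin n → ℤ := natScript σ with hσZ
    have hσZ0 : ∀ i, 0 ≤ σZ i := fun i => Int.natCast_nonneg _
    have hno' : ∀ i, 0 ≤ (G.cmax i - b i) - Matrix.vecMul σZ G.redLap i := by
      intro i
      have := hno i
      simpa using this
    have hστ : ∀ i, σZ i ≤ τ i := by
      have h1 : ∀ j, Matrix.vecMul (σZ - τ) G.redLap j ≤ 0 := by
        intro j
        rw [Matrix.sub_vecMul]
        have h2 := hno' j
        have h3 := hb_eq j
        have h4 := hc j
        simp only [Pi.sub_apply, Pi.zero_apply] at *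
        omega
      intro i
      have := G.nonpos_of_vecMul_nonpos h1 i
      simp only [Pi.sub_apply] at this
      omega
    have hub : ∀ i, (G.cmax + c) i - Matrix.vecMul (τ - σZ) G.redLap i ≤ G.cmax i := by
      intro i
      rw [Matrix.sub_vecMul]
      have h2 := hno' i
      have h3 := hb_eq i
      simp only [Pi.add_apply, Pi.sub_apply]
      omega
    have hpos : ∀ i, 0 ≤ (τ - σZ) i := by
      intro i
      simp only [Pi.sub_apply]
      have := hστ i
      omega
    have hlap := G.least_action s (G.cmax + c) hleg (τ - σZ) hpos hub
    apply hσ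
    funext i
    have h5 := hlap i
    simp only [Pi.sub_apply] at h5
    have h6 : σZ i ≤ 0 := by
      have : script s i = τ i := by rw [hτ]
      omega
    have h7 : (σ i : ℤ) = 0 := le_antisymm h6 (hσZ0 i)
    exact_mod_cast h7

lemma superstable_unique {s₁ s₂ : Fin n → ℤ} (h1 : G.IsSuperstable s₁) (h2 : G.IsSuperstable s₂)
    (σ : Fin n → ℤ) (h : ∀ j, s₁ j - s₂ j = Matrix.vecMul σ G.redLap j) : s₁ = s₂ := by
  obtain ⟨h10, h1s⟩ := h1
  obtain ⟨h20, h2s⟩ := h2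
  rw [Pi.le_def] at h10 h20
  set σp : Fin n → ℕ := fun i => (σ i).toNat with hp
  set σm : Fin n → ℕ := fun i => (-(σ i)).toNat with hm
  have hsplit : ∀ j, Matrix.vecMul (natScript σp) G.redLap j - Matrix.vecMul (natScript σm) G.redLap j
      = Matrix.vecMul σ G.redLap j := by
    intro j
    rw [← Pi.sub_apply, ← Matrix.sub_vecMul]
    congr 1
    funext i
    simp only [Pi.sub_apply, natScript, hp, hm]
    omega
  have hA : σp = 0 := by
    by_contra hne
    obtain ⟨i, hi⟩ := h1s σp hne
    have hpi : 0 < (σp i : ℤ) := by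
      by_contra hz
      push_neg at hz
      have : (σp i : ℤ) = 0 := le_antisymm hz (Int.natCast_nonneg _)
      have hzz : natScript σp i = 0 := by simpa [natScript] using this
      have := G.vecMul_nonpos_at (σ := natScript σp) (fun j => Int.natCast_nonneg _) hzz
      have := h10 i
      simp only [Pi.zero_apply] at *
      omega
    have hmi : natScript σm i = 0 := by
      simp only [natScript, hm]
      simp only [hp] at hpi
      omega
    have hmle := G.vecMul_nonpos_at (σ := natScript σm) (fun j => Int.natCast_nonneg _) hmi
    have heq := h i
    have hsp := hsplit i
    have h2i := h20 i
    simp only [Pi.zero_apply] at *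
    omega
  have hB : σm = 0 := by
    by_contra hne
    obtain ⟨i, hi⟩ := h2s σm hne
    have hmi : 0 < (σm i : ℤ) := by
      by_contra hz
      push_neg at hz
      have : (σm i : ℤ) = 0 := le_antisymm hz (Int.natCast_nonneg _)
      have hzz : natScript σm i = 0 := by simpa [natScript] using this
      have := G.vecMul_nonpos_at (σ := natScript σm) (fun j => Int.natCast_nonneg _) hzz
      have := h20 i
      simp only [Pi.zero_apply] at *
      omega
    have hpi : natScript σp i = 0 := by
      simp only [natScript, hp]
      simp only [hm] at hmi
      omega
    have hple := G.vecMul_nonpos_at (σ := natScript σp) (fun j => Int.natCast_nonneg _) hpi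
    have heq := h i
    have hsp := hsplit i
    have h1i := h10 i
    simp only [Pi.zero_apply] at *
    omega
  have hσ0 : σ = 0 := by
    funext i
    have e1 : σp i = 0 := congrFun hA i
    have e2 : σm i = 0 := congrFun hB i
    simp only [hp, hm] at e1 e2
    simp only [Pi.zero_apply]
    omega
  funext j
  have := h j
  rw [hσ0, Matrix.zero_vecMul] at this
  simp only [Pi.zero_apply] at this
  omega

end SinkDigraph

open SinkDigraph Matrix

theorem unique_critical_in_class (n : ℕ) (G : SinkDigraph n) (a : Fin n → ℤ) :
    ∃! b : Fin n → ℤ, G.Equiv a b ∧ G.IsCritical b := by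
  obtain ⟨σ₀, hσ₀⟩ := G.exists_dominating (fun j => G.cmax j - a j)
  set y : Fin n → ℤ := a + Matrix.vecMul σ₀ G.redLap with hy
  have hyc : ∀ j, G.cmax j ≤ y j := by
    intro j
    have := hσ₀ j
    simp only [hy, Pi.add_apply]
    omega
  have hcmax0 : ∀ j, (0:ℤ) ≤ G.cmax j := by
    intro j
    have h1 := G.outDeg_pos j
    have h2 : (1:ℤ) ≤ (G.outDeg j.castSucc : ℤ) := by exact_mod_cast h1
    show (0:ℤ) ≤ (G.outDeg j.castSucc : ℤ) - 1
    omega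
  have hy0 : (0 : Fin n → ℤ) ≤ y := by
    rw [Pi.le_def]
    intro j
    have := hyc j
    have := hcmax0 j
    simp only [Pi.zero_apply]
    omega
  obtain ⟨N, hN⟩ := G.exists_length_bound y hy0
  obtain ⟨b, hstab⟩ := G.stab_aux N y hy0 hN
  have hcrit : G.IsCritical b := by
    refine ⟨y - G.cmax, ?_, ?_⟩
    · rw [Pi.le_def]
      intro j
      have := hyc j
      simp only [Pi.sub_apply, Pi.zero_apply]
      omega
    · have hsum : G.cmax + (y - G.cmax) = y := by funext j; simp
      rw [hsum]
      exact hstab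
  have hequiv : G.Equiv a b := by
    obtain ⟨s, hleg, happ, hst⟩ := hstab
    refine ⟨σ₀ - script s, ?_⟩
    have := G.applySeq_eq s y
    rw [happ] at this
    rw [this, Matrix.sub_vecMul]
    funext j
    simp only [hy, Pi.sub_apply, Pi.add_apply]
    ring
  refine ⟨b, ⟨hequiv, hcrit⟩, ?_⟩
  rintro b' ⟨⟨σ', hσ'⟩, hcrit'⟩
  obtain ⟨σ, hσ⟩ := hequiv
  have hs1 := G.critical_dual_superstable hcrit'
  have hs2 := G.critical_dual_superstable hcrit
  have hdiff : ∀ j, (G.cmax - b') j - (G.cmax - b) j = Matrix.vecMul (σ - σ') G.redLap j := by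
    intro j
    rw [Matrix.sub_vecMul]
    have e1 := congrFun hσ j
    have e2 := congrFun hσ' j
    simp only [Pi.sub_apply] at e1 e2 ⊢
    omega
  have hkey := G.superstable_unique hs1 hs2 (σ - σ') hdiff
  funext j
  have := congrFun hkey j
  simp only [Pi.sub_apply] at this
  omega
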